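/- arXiv:2102.05576 — 4 statements merged into one kernel-verified Lean document; each statement's English description precedes it below -/
import Mathlib

section
/- Let E be an m×n rational matrix of rank g. Then any two g×g non-singular principal submatrices of E^T E are congruent over ℚ. -/
open Matrix

theorem stmt4 (m n g : ℕ) (E : Matrix (Fin m) (Fin n) ℚ) (hrank : E.rank = g)
    (f₁ f₂ : Fin g → Fin n) (hf₁ : Function.Injective f₁) (hf₂ : Function.Injective f₂)
    (h₁ : ((Eᵀ * E).submatrix f₁ f₁).det ≠ 0) (h₂ : ((Eᵀ * E).submatrix f₂ f₂).det ≠ 0) :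
    ∃ X : Matrix (Fin g) (Fin g) ℚ, X.det ≠ 0 ∧
      (Eᵀ * E).submatrix f₂ f₂ = Xᵀ * ((Eᵀ * E).submatrix f₁ f₁) * X := by
  set B₁ := E.submatrix id f₁ with hB₁
  set B₂ := E.submatrix id f₂ with hB₂
  have hgram₁ : (Eᵀ * E).submatrix f₁ f₁ = B₁ᵀ * B₁ := by
    ext a b; simp [Matrix.mul_apply, hB₁]
  have hgram₂ : (Eᵀ * E).submatrix f₂ f₂ = B₂ᵀ * B₂ := by
    ext a b; simp [Matrix.mul_apply, hB₂]
  set c : Fin n → (Fin m → ℚ) := fun j => Eᵀ j with hc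
  have hli : LinearIndependent ℚ (c ∘ f₁) := by
    rw [Fintype.linearIndependent_iff]
    intro x hx
    have hmv : B₁ *ᵥ x = 0 := by
      ext i
      have := congrFun hx i
      simpa [Matrix.mulVec, dotProduct, hB₁, hc, mul_comm, Finset.sum_apply] using this
    have h0 : ((Eᵀ * E).submatrix f₁ f₁) *ᵥ x = 0 := by
      rw [hgram₁, ← Matrix.mulVec_mulVec, hmv, Matrix.mulVec_zero]
    have := Matrix.eq_zero_of_mulVec_eq_zero h₁ h0
    intro i; exact congrFun this i
  have hspan_le : Submodule.span ℚ (Set.range (c ∘ f₁)) ≤ Submodule.span ℚ (Set.range c) :=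
    Submodule.span_mono (Set.range_comp_subset_range _ _)
  have hfr_big : Module.finrank ℚ (Submodule.span ℚ (Set.range c)) = g := by
    rw [← hrank, Matrix.rank_eq_finrank_span_cols]; rfl
  have hfr_small : Module.finrank ℚ (Submodule.span ℚ (Set.range (c ∘ f₁))) = g := by
    rw [finrank_span_eq_card hli, Fintype.card_fin]
  have hspan_eq : Submodule.span ℚ (Set.range (c ∘ f₁)) = Submodule.span ℚ (Set.range c) :=
    Submodule.eq_of_le_of_finrank_le hspan_le (by rw [hfr_big, hfr_small])
  have hmem : ∀ j, c (f₂ j) ∈ Submodule.span ℚ (Set.range (c ∘ f₁)) := by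
    intro j; rw [hspan_eq]; exact Submodule.subset_span ⟨f₂ j, rfl⟩
  choose x hx using fun j => (Submodule.mem_span_range_iff_exists_fun ℚ).1 (hmem j)
  set X : Matrix (Fin g) (Fin g) ℚ := fun k j => x j k with hX
  have hB₂eq : B₂ = B₁ * X := by
    ext i j
    have := congrFun (hx j) i
    simp only [Finset.sum_apply, Pi.smul_apply, Function.comp_apply, smul_eq_mul, hc] at this
    simp only [Matrix.mul_apply, hB₁, hB₂, hX, Matrix.submatrix_apply, id_eq]
    simp only [Matrix.transpose_apply] at this
    rw [← this]
    exact Finset.sum_congr rfl fun k _ => mul_comm _ _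
  have key : (Eᵀ * E).submatrix f₂ f₂ = Xᵀ * ((Eᵀ * E).submatrix f₁ f₁) * X := by
    rw [hgram₂, hB₂eq, Matrix.transpose_mul, hgram₁]
    rw [Matrix.mul_assoc, Matrix.mul_assoc, Matrix.mul_assoc]
  refine ⟨X, ?_, key⟩
  intro hdet
  apply h₂
  rw [key, Matrix.det_mul, Matrix.det_mul, hdet, mul_zero]
end

section
/- For every prime p and every integer n ≥ 1, the product ∏_{1 < i < j ≤ n} (i(i−1), j(j−1))_p of Hilbert symbols equals (−1, n)_p. -/
/-- The `p`-adic Hilbert symbol: `1` if `a x² + b y² = z²` has a nontrivial solution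
over `ℚ_[p]`, and `-1` otherwise. -/
noncomputable def hilbertSym (p : ℕ) [Fact p.Prime] (a b : ℚ) : ℤ :=
  letI := Classical.propDecidable
    (∃ x y z : ℚ_[p], ¬(x = 0 ∧ y = 0 ∧ z = 0) ∧ (a : ℚ_[p]) * x ^ 2 + (b : ℚ_[p]) * y ^ 2 = z ^ 2)
  if ∃ x y z : ℚ_[p], ¬(x = 0 ∧ y = 0 ∧ z = 0) ∧ (a : ℚ_[p]) * x ^ 2 + (b : ℚ_[p]) * y ^ 2 = z ^ 2
  then 1 else -1

namespace HilAux

variable {p : ℕ} [Fact p.Prime]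

/-- `b` is represented by the norm form `z² - a x²` over `ℚ_[p]`. -/
def Rep (a b : ℚ_[p]) : Prop := ∃ z x : ℚ_[p], z ^ 2 - a * x ^ 2 = b

theorem rep_mul {a b c : ℚ_[p]} (hb : Rep a b) (hc : Rep a c) : Rep a (b * c) := by
  obtain ⟨z1, x1, h1⟩ := hb
  obtain ⟨z2, x2, h2⟩ := hc
  exact ⟨z1 * z2 + a * x1 * x2, z1 * x2 + x1 * z2, by rw [← h1, ← h2]; ring⟩

theorem rep_sq (a s : ℚ_[p]) : Rep a (s ^ 2) := ⟨s, 0, by ring⟩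

theorem rep_one (a : ℚ_[p]) : Rep a 1 := ⟨1, 0, by ring⟩

theorem rep_inv {a b : ℚ_[p]} (hb : b ≠ 0) (h : Rep a b) : Rep a b⁻¹ := by
  obtain ⟨z, x, h1⟩ := h
  refine ⟨z / b, x / b, ?_⟩
  have e : (z / b) ^ 2 - a * (x / b) ^ 2 = (z ^ 2 - a * x ^ 2) / b ^ 2 := by ring
  rw [e, h1, sq, ← div_div, div_self hb, one_div]

theorem rep_cancel {a b c : ℚ_[p]} (hb : b ≠ 0) (h1 : Rep a b) (h2 : Rep a (b * c)) :
    Rep a c := by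
  have := rep_mul (rep_inv hb h1) h2
  rwa [inv_mul_cancel_left₀ hb] at this

theorem rep_sq_mul {a b : ℚ_[p]} (s : ℚ_[p]) (h : Rep a b) : Rep a (s ^ 2 * b) :=
  rep_mul (rep_sq a s) h

theorem rep_of_sq_mul {a b : ℚ_[p]} {s : ℚ_[p]} (hs : s ≠ 0) (h : Rep a (s ^ 2 * b)) :
    Rep a b :=
  rep_cancel (pow_ne_zero 2 hs) (rep_sq a s) h

theorem rep_shift {a b : ℚ_[p]} {s : ℚ_[p]} (hs : s ≠ 0) :
    Rep (s ^ 2 * a) b ↔ Rep a b := by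
  constructor
  · rintro ⟨z, x, h⟩
    exact ⟨z, s * x, by rw [← h]; ring⟩
  · rintro ⟨z, x, h⟩
    exact ⟨z, x / s, by rw [← h]; field_simp⟩

theorem rep_of_isSquare {a : ℚ_[p]} (ha : a ≠ 0) (h : IsSquare a) (b : ℚ_[p]) : Rep a b := by
  obtain ⟨s, rfl⟩ := h
  have hs : s ≠ 0 := by intro h; apply ha; rw [h]; ring
  exact ⟨(b + 1) / 2, (b - 1) / (2 * s), by field_simp; ring⟩

/-- The solvability proposition in the definition of `hilbertSym`. -/
def HilProp (a b : ℚ) : Prop :=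
  ∃ x y z : ℚ_[p], ¬(x = 0 ∧ y = 0 ∧ z = 0) ∧ (a : ℚ_[p]) * x ^ 2 + (b : ℚ_[p]) * y ^ 2 = z ^ 2

theorem hilProp_iff_rep {a b : ℚ} (ha : a ≠ 0) (hb : b ≠ 0) :
    HilProp (p := p) a b ↔ Rep (a : ℚ_[p]) (b : ℚ_[p]) := by
  have ha' : (a : ℚ_[p]) ≠ 0 := by exact_mod_cast ha
  have hb' : (b : ℚ_[p]) ≠ 0 := by exact_mod_cast hb
  constructor
  · rintro ⟨x, y, z, hnt, heq⟩
    by_cases hy : y = 0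
    · subst hy
      have hx : x ≠ 0 := by
        rintro rfl
        simp only [ne_eq, zero_pow, mul_zero, zero_add, OfNat.ofNat_ne_zero,
          not_false_iff] at heq
        have hz : z = 0 := by
          have h2 : z ^ 2 = 0 := by linear_combination -heq
          exact pow_eq_zero_iff (n := 2) (by norm_num) |>.mp h2
        exact hnt ⟨rfl, rfl, hz⟩
      have hsq : IsSquare (a : ℚ_[p]) := by
        refine ⟨z / x, ?_⟩
        have : (a : ℚ_[p]) * x ^ 2 = z ^ 2 := by linear_combination heq
        field_simp
        linear_combination this
      exact rep_of_isSquare ha' hsq _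
    · refine ⟨z / y, x / y, ?_⟩
      field_simp
      linear_combination -heq
  · rintro ⟨z, x, h⟩
    exact ⟨x, 1, z, by simp, by linear_combination -h⟩

theorem hilbertSym_eq_one_iff {a b : ℚ} (ha : a ≠ 0) (hb : b ≠ 0) :
    hilbertSym p a b = 1 ↔ Rep (a : ℚ_[p]) (b : ℚ_[p]) := by
  rw [← hilProp_iff_rep ha hb]
  unfold hilbertSym HilProp
  split_ifs with h
  · exact ⟨fun _ => h, fun _ => rfl⟩
  · exact ⟨fun hh => absurd hh (by norm_num), fun hh => absurd hh h⟩

theorem hilbertSym_eq_neg_one_iff {a b : ℚ} (ha : a ≠ 0) (hb : b ≠ 0) :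
    hilbertSym p a b = -1 ↔ ¬ Rep (a : ℚ_[p]) (b : ℚ_[p]) := by
  rw [← hilProp_iff_rep ha hb]
  unfold hilbertSym HilProp
  split_ifs with h
  · exact ⟨fun hh => absurd hh (by norm_num), fun hh => absurd h hh⟩
  · exact ⟨fun _ => h, fun _ => rfl⟩

theorem hilbertSym_symm (a b : ℚ) : hilbertSym p a b = hilbertSym p b a := by
  unfold hilbertSym
  have : (∃ x y z : ℚ_[p], ¬(x = 0 ∧ y = 0 ∧ z = 0) ∧
      (a : ℚ_[p]) * x ^ 2 + (b : ℚ_[p]) * y ^ 2 = z ^ 2) ↔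
      (∃ x y z : ℚ_[p], ¬(x = 0 ∧ y = 0 ∧ z = 0) ∧
      (b : ℚ_[p]) * x ^ 2 + (a : ℚ_[p]) * y ^ 2 = z ^ 2) := by
    constructor <;> rintro ⟨x, y, z, hnt, heq⟩ <;>
      exact ⟨y, x, z, by tauto, by linear_combination heq⟩
  split_ifs with h1 h2 h2
  · rfl
  · exact absurd (this.mp h1) h2
  · exact absurd (this.mpr h2) h1
  · rfl

theorem hilbertSym_mul_self (a b : ℚ) : hilbertSym p a b * hilbertSym p a b = 1 := by
  unfold hilbertSym
  split_ifs <;> norm_num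

end HilAux


namespace HilAux

variable {p : ℕ} [Fact p.Prime]

theorem toZMod_ne_zero_of_isUnit {u : ℤ_[p]} (hu : IsUnit u) : PadicInt.toZMod u ≠ 0 := by
  intro h
  have h1 : u ∈ RingHom.ker (PadicInt.toZMod : ℤ_[p] →+* ZMod p) := h
  rw [PadicInt.ker_toZMod, PadicInt.maximalIdeal_eq_span_p, Ideal.mem_span_singleton,
    ← PadicInt.norm_lt_one_iff_dvd] at h1
  rw [PadicInt.isUnit_iff] at hu
  rw [hu] at h1
  exact lt_irrefl 1 h1

theorem isUnit_of_toZMod_ne_zero {u : ℤ_[p]} (hu : PadicInt.toZMod u ≠ 0) : IsUnit u := by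
  rw [PadicInt.isUnit_iff]
  rcases lt_or_eq_of_le (PadicInt.norm_le_one u) with h | h
  · exfalso
    apply hu
    have h1 : u ∈ RingHom.ker (PadicInt.toZMod : ℤ_[p] →+* ZMod p) := by
      rw [PadicInt.ker_toZMod, PadicInt.maximalIdeal_eq_span_p, Ideal.mem_span_singleton,
        ← PadicInt.norm_lt_one_iff_dvd]
      exact h
    exact h1
  · exact h

theorem coe_ne_zero_of_isUnit {u : ℤ_[p]} (hu : IsUnit u) : (u : ℚ_[p]) ≠ 0 := by
  intro h
  exact hu.ne_zero (PadicInt.coe_eq_zero.mp h)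

/-- decomposition of a nonzero `p`-adic number as a power of `p` times a unit. -/
theorem exists_unit_decomp {x : ℚ_[p]} (hx : x ≠ 0) :
    ∃ (v : ℤ) (u : ℤ_[p]), IsUnit u ∧ x = (p : ℚ_[p]) ^ v * u := by
  have hp0 : (p : ℚ_[p]) ≠ 0 := by
    exact_mod_cast (Fact.out : p.Prime).ne_zero
  set v := x.valuation with hv
  have hw : ‖(p : ℚ_[p]) ^ (-v) * x‖ = 1 := by
    rw [norm_mul, Padic.norm_p_zpow, Padic.norm_eq_zpow_neg_valuation hx, neg_neg, ← zpow_add₀, ← hv,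
      add_neg_cancel, zpow_zero]
    exact_mod_cast (Fact.out : p.Prime).ne_zero
  refine ⟨v, ⟨(p : ℚ_[p]) ^ (-v) * x, le_of_eq hw⟩, ?_, ?_⟩
  · exact PadicInt.isUnit_iff.mpr hw
  · show x = (p : ℚ_[p]) ^ v * ((p : ℚ_[p]) ^ (-v) * x)
    rw [← mul_assoc, ← zpow_add₀ hp0, add_neg_cancel, zpow_zero, one_mul]

open Polynomial in
theorem isSquare_of_norm_lt {c a0 : ℤ_[p]} (h : ‖a0 ^ 2 - c‖ < ‖2 * a0‖ ^ 2) :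
    IsSquare c := by
  have hF : ((X ^ 2 - C c : Polynomial ℤ_[p]).eval a0) = a0 ^ 2 - c := by simp
  have hF' : ((X ^ 2 - C c : Polynomial ℤ_[p]).derivative.eval a0) = 2 * a0 := by
    simp [derivative_X_pow]; norm_num
  obtain ⟨z, hz, -⟩ := hensels_lemma (F := X ^ 2 - C c) (a := a0) (by rw [Polynomial.coe_aeval_eq_eval, hF, hF']; exact h)
  refine ⟨z, ?_⟩
  have h2 : z ^ 2 - c = 0 := by simpa using hz
  have : c = z ^ 2 := by linear_combination -h2
  rw [this]; ring

/-- Hensel: a unit whose residue is a nonzero square is a square (`p` odd). -/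
theorem isSquare_of_toZMod_isSquare (hp : p ≠ 2) {c : ℤ_[p]} (hc : PadicInt.toZMod c ≠ 0)
    (h : IsSquare (PadicInt.toZMod c)) : IsSquare c := by
  obtain ⟨t, ht⟩ := h
  have ht0 : t ≠ 0 := by
    rintro rfl
    exact hc (by simpa using ht)
  set a0 : ℤ_[p] := ((t.val : ℕ) : ℤ_[p]) with ha0
  have hta : PadicInt.toZMod a0 = t := by
    rw [ha0, map_natCast, ZMod.natCast_val, ZMod.cast_id]
  apply isSquare_of_norm_lt (a0 := a0)
  have hunit_a0 : IsUnit a0 := isUnit_of_toZMod_ne_zero (by rw [hta]; exact ht0)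
  have hunit_2 : IsUnit (2 : ℤ_[p]) := by
    apply isUnit_of_toZMod_ne_zero
    have h20 : PadicInt.toZMod (2 : ℤ_[p]) = ((2 : ℕ) : ZMod p) := by
      rw [show ((2 : ℤ_[p])) = ((2 : ℕ) : ℤ_[p]) by push_cast; ring, map_natCast]
    rw [h20]
    intro h2
    rw [ZMod.natCast_eq_zero_iff] at h2
    exact hp ((Nat.prime_dvd_prime_iff_eq Fact.out Nat.prime_two).mp h2)
  have h2a : ‖2 * a0‖ = 1 := by
    rw [PadicInt.isUnit_iff] at hunit_a0 hunit_2
    rw [norm_mul, hunit_a0, hunit_2, one_mul]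
  rw [h2a, one_pow]
  have hker : PadicInt.toZMod (a0 ^ 2 - c) = 0 := by
    rw [map_sub, map_pow, hta, ht, sq, sub_self]
  have h1 : a0 ^ 2 - c ∈ RingHom.ker (PadicInt.toZMod : ℤ_[p] →+* ZMod p) := hker
  rw [PadicInt.ker_toZMod, PadicInt.maximalIdeal_eq_span_p, Ideal.mem_span_singleton,
    ← PadicInt.norm_lt_one_iff_dvd] at h1
  exact h1

/-- A 2-adic integer congruent to 1 mod 8 is a square. -/
theorem isSquare_of_toZModPow_three (hp : p = 2) {c : ℤ_[p]}
    (hc : PadicInt.toZModPow 3 c = 1) : IsSquare c := by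
  subst hp
  apply isSquare_of_norm_lt (a0 := 1)
  have hker : (1 : ℤ_[2]) ^ 2 - c ∈ RingHom.ker (PadicInt.toZModPow 3 : ℤ_[2] →+* ZMod (2 ^ 3)) := by
    show PadicInt.toZModPow 3 (1 ^ 2 - c) = 0
    rw [map_sub, map_pow, map_one, hc]
    ring
  rw [PadicInt.ker_toZModPow] at hker
  have h1 : ‖(1 : ℤ_[2]) ^ 2 - c‖ ≤ ((2 : ℕ) : ℝ) ^ (-(3 : ℕ) : ℤ) := by
    rw [PadicInt.norm_le_pow_iff_mem_span_pow]
    exact hker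
  have h3 : ‖(2 : ℤ_[2]) * 1‖ = 1 / 2 := by
    rw [mul_one]
    have h4 : (2 : ℤ_[2]) = ((2 : ℕ) : ℤ_[2]) := by norm_num
    rw [h4, PadicInt.norm_p]
    norm_num
  rw [h3]
  calc ‖(1 : ℤ_[2]) ^ 2 - c‖ ≤ ((2 : ℕ) : ℝ) ^ (-(3 : ℕ) : ℤ) := h1
  _ < (1 / 2) ^ 2 := by norm_num

end HilAux

namespace HilAux

variable {p : ℕ} [Fact p.Prime]

theorem p_ne_zero' : (p : ℚ_[p]) ≠ 0 := by
  exact_mod_cast (Fact.out : p.Prime).ne_zero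

theorem pzpow_two (x : ℚ_[p]) (k : ℤ) : x ^ (2 * k) = (x ^ k) ^ 2 := by
  rw [mul_comm, zpow_mul, show ((2 : ℤ)) = ((2 : ℕ) : ℤ) by norm_num, zpow_natCast]

theorem rep_pshift (k : ℤ) (a' b : ℚ_[p]) :
    Rep ((p : ℚ_[p]) ^ (2 * k) * a') b ↔ Rep a' b := by
  rw [pzpow_two]
  exact rep_shift (zpow_ne_zero _ p_ne_zero')

theorem rep_zpow_sq_mul {a' c' : ℚ_[p]} (m : ℤ) (h : Rep a' c') :
    Rep a' ((p : ℚ_[p]) ^ (2 * m) * c') := by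
  rw [pzpow_two]
  exact rep_sq_mul _ h

theorem zmod_nonsq_mul (hp : p ≠ 2) {α β : ZMod p} (hα : ¬IsSquare α) (hβ : ¬IsSquare β) :
    IsSquare (α * β) := by
  have hα0 : α ≠ 0 := fun h => hα ⟨0, by rw [h]; ring⟩
  have hβ0 : β ≠ 0 := fun h => hβ ⟨0, by rw [h]; ring⟩
  have hchar : ringChar (ZMod p) ≠ 2 := by
    rw [ZMod.ringChar_zmod_n]; exact hp
  have h1 : quadraticChar (ZMod p) α = -1 := (quadraticChar_neg_one_iff_not_isSquare).mpr hα
  have h2 : quadraticChar (ZMod p) β = -1 := (quadraticChar_neg_one_iff_not_isSquare).mpr hβ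
  have h3 : quadraticChar (ZMod p) (α * β) = 1 := by
    rw [map_mul, h1, h2]; ring
  exact (quadraticChar_one_iff_isSquare (mul_ne_zero hα0 hβ0)).mp h3

open Polynomial in
theorem exists_solve_unit (hp : p ≠ 2) {u w : ℤ_[p]} (hu : PadicInt.toZMod u ≠ 0)
    (hw : PadicInt.toZMod w ≠ 0) : ∃ z x : ℤ_[p], z ^ 2 - u * x ^ 2 = w := by
  set U := PadicInt.toZMod u with hU
  set W := PadicInt.toZMod w with hW
  have hcard : Fintype.card (ZMod p) % 2 = 1 := by
    rw [ZMod.card]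
    exact Nat.odd_iff.mp ((Fact.out : p.Prime).odd_of_ne_two hp)
  obtain ⟨zb, xb, hzx⟩ := FiniteField.exists_root_sum_quadratic
    (f := (X ^ 2 : (ZMod p)[X])) (g := C (-U) * X ^ 2 + C 0 * X + C (-W))
    (degree_X_pow 2) (degree_quadratic (neg_ne_zero.mpr hu)) hcard
  have h0 : zb ^ 2 + (-(U * xb ^ 2) + -W) = 0 := by simpa using hzx
  have hzx' : zb ^ 2 - U * xb ^ 2 - W = 0 := by linear_combination h0
  by_cases hzb : zb = 0
  · -- z̄ = 0 : use x with x² = -w/u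
    have hxb : xb ≠ 0 := by
      intro h
      rw [hzb, h] at hzx'
      simp at hzx'
      exact hw hzx'
    have huu : IsUnit u := isUnit_of_toZMod_ne_zero hu
    set einv : ℤ_[p] := ↑huu.unit⁻¹ with heinv
    set e : ℤ_[p] := -w * einv with he
    have huinv : PadicInt.toZMod einv * U = 1 := by
      rw [hU, ← map_mul]
      rw [heinv, huu.val_inv_mul, map_one]
    have hesq : PadicInt.toZMod e = xb ^ 2 := by
      have hzb2 : zb ^ 2 = 0 := by rw [hzb]; ring
      have hwval : W = -(U * xb ^ 2) := by linear_combination -hzx' + hzb2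
      rw [he, map_mul, map_neg, ← hW, hwval]
      have : -(-(U * xb ^ 2)) = U * xb ^ 2 := by ring
      rw [this]
      calc U * xb ^ 2 * PadicInt.toZMod einv
          = xb ^ 2 * (PadicInt.toZMod einv * U) := by ring
        _ = xb ^ 2 := by rw [huinv, mul_one]
    have hene : PadicInt.toZMod e ≠ 0 := by
      rw [hesq]
      exact pow_ne_zero 2 hxb
    obtain ⟨d, hd⟩ := isSquare_of_toZMod_isSquare hp hene ⟨xb, by rw [hesq]; ring⟩
    refine ⟨0, d, ?_⟩
    have hue : u * e = -w := by
      rw [he]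
      calc u * (-w * einv) = -w * (u * einv) := by ring
        _ = -w * 1 := by rw [heinv, huu.mul_val_inv]
        _ = -w := by ring
    have : u * (d * d) = -w := by rw [← hd]; exact hue
    linear_combination -this
  · -- z̄ ≠ 0 : u x² + w is a unit square
    set x : ℤ_[p] := ((xb.val : ℕ) : ℤ_[p]) with hx
    have hxz : PadicInt.toZMod x = xb := by
      rw [hx, map_natCast, ZMod.natCast_val, ZMod.cast_id]
    set c : ℤ_[p] := u * x ^ 2 + w with hc
    have hcz : PadicInt.toZMod c = zb ^ 2 := by
      rw [hc, map_add, map_mul, map_pow, hxz, ← hU, ← hW]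
      linear_combination -hzx'
    have hcne : PadicInt.toZMod c ≠ 0 := by
      rw [hcz]; exact pow_ne_zero 2 hzb
    obtain ⟨d, hd⟩ := isSquare_of_toZMod_isSquare hp hcne ⟨zb, by rw [hcz]; ring⟩
    refine ⟨d, x, ?_⟩
    have : d * d = u * x ^ 2 + w := by rw [← hd, hc]
    linear_combination this

/-- The index-two covering property, odd `p`. -/
theorem cover_odd (hp : p ≠ 2) {a : ℚ_[p]} (ha : a ≠ 0) :
    ∃ t : ℚ_[p], t ≠ 0 ∧ ∀ b : ℚ_[p], b ≠ 0 → Rep a b ∨ Rep a (t * b) := by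
  obtain ⟨v, u, hu, rfl⟩ := exists_unit_decomp ha
  have hu' : PadicInt.toZMod u ≠ 0 := toZMod_ne_zero_of_isUnit hu
  have huq : (u : ℚ_[p]) ≠ 0 := coe_ne_zero_of_isUnit hu
  rcases Int.even_or_odd v with ⟨k, hk⟩ | ⟨k, hk⟩
  · -- `a` has even valuation
    refine ⟨(p : ℚ_[p]), p_ne_zero', fun b hb => ?_⟩
    have hsh : ∀ b' : ℚ_[p], Rep ((p : ℚ_[p]) ^ v * (u : ℚ_[p])) b' ↔ Rep (u : ℚ_[p]) b' := by
      intro b'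
      rw [hk, show k + k = 2 * k by ring]
      exact rep_pshift k _ b'
    obtain ⟨w, c, hc, rfl⟩ := exists_unit_decomp hb
    have hc' : PadicInt.toZMod c ≠ 0 := toZMod_ne_zero_of_isUnit hc
    have hrepc : Rep (u : ℚ_[p]) (c : ℚ_[p]) := by
      obtain ⟨z, x, hzx⟩ := exists_solve_unit hp hu' hc'
      exact ⟨(z : ℚ_[p]), (x : ℚ_[p]), by exact_mod_cast congrArg (fun t : ℤ_[p] => (t : ℚ_[p])) hzx⟩
    rcases Int.even_or_odd w with ⟨m, hm⟩ | ⟨m, hm⟩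
    · left
      rw [hsh, hm, show m + m = 2 * m by ring]
      exact rep_zpow_sq_mul m hrepc
    · right
      rw [hsh]
      have heq : (p : ℚ_[p]) * ((p : ℚ_[p]) ^ w * (c : ℚ_[p]))
          = (p : ℚ_[p]) ^ (2 * (m + 1)) * (c : ℚ_[p]) := by
        rw [hm, show (2 * (m + 1) : ℤ) = 2 * m + 1 + 1 by ring,
          zpow_add₀ p_ne_zero' (2 * m + 1) 1, zpow_one]
        ring
      rw [heq]
      exact rep_zpow_sq_mul (m + 1) hrepc
  · -- `a` has odd valuation
    obtain ⟨ρ, hρ⟩ := FiniteField.exists_nonsquare (F := ZMod p)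
      (by rw [ZMod.ringChar_zmod_n]; exact hp)
    have hρ0 : ρ ≠ 0 := fun h => hρ ⟨0, by rw [h]; ring⟩
    set r : ℤ_[p] := ((ρ.val : ℕ) : ℤ_[p]) with hrdef
    have hr : PadicInt.toZMod r = ρ := by
      rw [hrdef, map_natCast, ZMod.natCast_val, ZMod.cast_id]
    have hrunit : IsUnit r := isUnit_of_toZMod_ne_zero (by rw [hr]; exact hρ0)
    have hrq : (r : ℚ_[p]) ≠ 0 := coe_ne_zero_of_isUnit hrunit
    refine ⟨(r : ℚ_[p]), hrq, fun b hb => ?_⟩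
    have hsh : ∀ b' : ℚ_[p],
        Rep ((p : ℚ_[p]) ^ v * (u : ℚ_[p])) b' ↔ Rep ((p : ℚ_[p]) * (u : ℚ_[p])) b' := by
      intro b'
      rw [hk, zpow_add₀ p_ne_zero', zpow_one, mul_assoc]
      exact rep_pshift k _ b'
    obtain ⟨w, c, hc, rfl⟩ := exists_unit_decomp hb
    have hc' : PadicInt.toZMod c ≠ 0 := toZMod_ne_zero_of_isUnit hc
    have hcq : (c : ℚ_[p]) ≠ 0 := coe_ne_zero_of_isUnit hc
    rcases Int.even_or_odd w with ⟨m, hm⟩ | ⟨m, hm⟩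
    · -- `b` has even valuation : `b` or `r·b` is a square
      by_cases hsq : IsSquare (PadicInt.toZMod c)
      · left
        obtain ⟨d, hd⟩ := isSquare_of_toZMod_isSquare hp hc' hsq
        have hdq : (c : ℚ_[p]) = (d : ℚ_[p]) * (d : ℚ_[p]) := by
          exact_mod_cast congrArg (fun t : ℤ_[p] => (t : ℚ_[p])) hd
        have hbeq : (p : ℚ_[p]) ^ w * (c : ℚ_[p]) = ((p : ℚ_[p]) ^ m * (d : ℚ_[p])) ^ 2 := by
          rw [hm, show m + m = 2 * m by ring, mul_pow, ← pzpow_two]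
          linear_combination ((p : ℚ_[p]) ^ (2 * m)) * hdq
        rw [hbeq]
        exact rep_sq _ _
      · right
        have hsq2 : IsSquare (PadicInt.toZMod (r * c)) := by
          rw [map_mul, hr]
          exact zmod_nonsq_mul hp hρ hsq
        have hrc : PadicInt.toZMod (r * c) ≠ 0 := by
          rw [map_mul, hr]
          exact mul_ne_zero hρ0 hc'
        obtain ⟨d, hd⟩ := isSquare_of_toZMod_isSquare hp hrc hsq2
        have hdq : (r : ℚ_[p]) * (c : ℚ_[p]) = (d : ℚ_[p]) * (d : ℚ_[p]) := by
          exact_mod_cast congrArg (fun t : ℤ_[p] => (t : ℚ_[p])) hd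
        have hbeq : (r : ℚ_[p]) * ((p : ℚ_[p]) ^ w * (c : ℚ_[p]))
            = ((p : ℚ_[p]) ^ m * (d : ℚ_[p])) ^ 2 := by
          rw [hm, show m + m = 2 * m by ring, mul_pow, ← pzpow_two]
          linear_combination ((p : ℚ_[p]) ^ (2 * m)) * hdq
        rw [hbeq]
        exact rep_sq _ _
    · -- `b` has odd valuation
      have huu : IsUnit u := hu
      set einv : ℤ_[p] := ↑huu.unit⁻¹ with heinv
      have huinv : u * einv = 1 := by rw [heinv]; exact huu.mul_val_inv
      by_cases hsq : IsSquare (PadicInt.toZMod (-c * einv))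
      · left
        rw [hsh]
        have hene : PadicInt.toZMod (-c * einv) ≠ 0 := by
          rw [map_mul, map_neg]
          apply mul_ne_zero (neg_ne_zero.mpr hc')
          rw [heinv]
          exact toZMod_ne_zero_of_isUnit huu.unit⁻¹.isUnit
        obtain ⟨d, hd⟩ := isSquare_of_toZMod_isSquare hp hene hsq
        have key : (u : ℤ_[p]) * (d * d) = -c := by
          rw [← hd]
          calc u * (-c * einv) = -c * (u * einv) := by ring
            _ = -c := by rw [huinv, mul_one]
        have keyq : (u : ℚ_[p]) * ((d : ℚ_[p]) * (d : ℚ_[p])) = -(c : ℚ_[p]) := by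
          exact_mod_cast congrArg (fun t : ℤ_[p] => (t : ℚ_[p])) key
        refine ⟨0, (p : ℚ_[p]) ^ m * (d : ℚ_[p]), ?_⟩
        have hP : (p : ℚ_[p]) ^ w = (p : ℚ_[p]) * ((p : ℚ_[p]) ^ m) ^ 2 := by
          rw [hm, ← pzpow_two, zpow_add₀ p_ne_zero', zpow_one]
          ring
        rw [hP]
        linear_combination (-(p : ℚ_[p]) * ((p : ℚ_[p]) ^ m) ^ 2) * keyq
      · right
        rw [hsh]
        have hene : PadicInt.toZMod (-c * einv) ≠ 0 := by
          rw [map_mul, map_neg]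
          apply mul_ne_zero (neg_ne_zero.mpr hc')
          rw [heinv]
          exact toZMod_ne_zero_of_isUnit huu.unit⁻¹.isUnit
        have hsq2 : IsSquare (PadicInt.toZMod (r * (-c * einv))) := by
          rw [map_mul, hr]
          exact zmod_nonsq_mul hp hρ hsq
        have hrene : PadicInt.toZMod (r * (-c * einv)) ≠ 0 := by
          rw [map_mul, hr]
          exact mul_ne_zero hρ0 hene
        obtain ⟨d, hd⟩ := isSquare_of_toZMod_isSquare hp hrene hsq2
        have key : (u : ℤ_[p]) * (d * d) = -(r * c) := by
          rw [← hd]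
          calc u * (r * (-c * einv)) = -(r * c) * (u * einv) := by ring
            _ = -(r * c) := by rw [huinv, mul_one]
        have keyq : (u : ℚ_[p]) * ((d : ℚ_[p]) * (d : ℚ_[p]))
            = -((r : ℚ_[p]) * (c : ℚ_[p])) := by
          exact_mod_cast congrArg (fun t : ℤ_[p] => (t : ℚ_[p])) key
        refine ⟨0, (p : ℚ_[p]) ^ m * (d : ℚ_[p]), ?_⟩
        have hP : (p : ℚ_[p]) ^ w = (p : ℚ_[p]) * ((p : ℚ_[p]) ^ m) ^ 2 := by
          rw [hm, ← pzpow_two, zpow_add₀ p_ne_zero', zpow_one]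
          ring
        rw [hP]
        linear_combination (-(p : ℚ_[p]) * ((p : ℚ_[p]) ^ m) ^ 2) * keyq

end HilAux

namespace HilAux

variable {p : ℕ} [Fact p.Prime]

theorem not_two_dvd_of_isUnit {u : ℤ_[p]} (hp : p = 2) (hu : IsUnit u) : ¬(2 : ℤ_[p]) ∣ u := by
  subst hp
  intro hdvd
  have h1 : ‖u‖ < 1 := by
    rw [PadicInt.norm_lt_one_iff_dvd]
    exact_mod_cast hdvd
  rw [PadicInt.isUnit_iff.mp hu] at h1
  exact lt_irrefl 1 h1

theorem rep_cast_of_data (hp : p = 2) (A C B' Z X S : ℤ) (j m : ℕ)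
    (hS : (S : ℚ_[p]) ≠ 0) (hB' : (B' : ℚ_[p]) ≠ 0)
    (hw : Z ^ 2 - A * X ^ 2 = B' * S ^ 2)
    (hm4 : B' * C = 4 ^ j * (m : ℤ)) (hm8 : ((m : ZMod (2 ^ 3))) = 1) :
    Rep ((A : ℚ_[p])) ((C : ℚ_[p])) := by
  subst hp
  obtain ⟨c, hc⟩ := isSquare_of_toZModPow_three rfl
    (c := (m : ℤ_[2])) (by rw [map_natCast]; exact hm8)
  have hcc : (m : ℚ_[2]) = (c : ℚ_[2]) * (c : ℚ_[2]) := by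
    exact_mod_cast congrArg (fun t : ℤ_[2] => (t : ℚ_[2])) hc
  have hrepB' : Rep ((A : ℚ_[2])) ((B' : ℚ_[2])) := by
    refine ⟨(Z : ℚ_[2]) / (S : ℚ_[2]), (X : ℚ_[2]) / (S : ℚ_[2]), ?_⟩
    have hwq : (Z : ℚ_[2]) ^ 2 - (A : ℚ_[2]) * (X : ℚ_[2]) ^ 2
        = (B' : ℚ_[2]) * (S : ℚ_[2]) ^ 2 := by exact_mod_cast hw
    field_simp
    linear_combination hwq
  have hq := rep_mul hrepB' (rep_sq ((A : ℚ_[2])) ((2 : ℚ_[2]) ^ j / (B' : ℚ_[2]) * (c : ℚ_[2])))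
  have h4 : (B' : ℚ_[2]) * (C : ℚ_[2]) = (4 : ℚ_[2]) ^ j * (m : ℚ_[2]) := by
    exact_mod_cast hm4
  have heq : (B' : ℚ_[2]) * ((2 : ℚ_[2]) ^ j / (B' : ℚ_[2]) * (c : ℚ_[2])) ^ 2
      = (C : ℚ_[2]) := by
    have h24 : (4 : ℚ_[2]) ^ j = ((2 : ℚ_[2]) ^ j) ^ 2 := by
      rw [← pow_mul, mul_comm j 2, pow_mul]
      norm_num
    rw [h24] at h4
    field_simp
    linear_combination (-((2 : ℚ_[2]) ^ j) ^ 2) * hcc - h4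
  rwa [heq] at hq

theorem reduce_two (hp : p = 2) {b : ℚ_[p]} (hb : b ≠ 0) :
    ∃ (B : ℤ) (s : ℚ_[p]),
      (B = 1 ∨ B = 3 ∨ B = 5 ∨ B = 7 ∨ B = 2 ∨ B = 6 ∨ B = 10 ∨ B = 14) ∧
      s ≠ 0 ∧ b = (B : ℚ_[p]) * s ^ 2 := by
  subst hp
  obtain ⟨v, u, hu, rfl⟩ := exists_unit_decomp hb
  haveI : NeZero ((2:ℕ) ^ 3) := ⟨by positivity⟩
  set r := PadicInt.toZModPow 3 u with hr
  have hrval : ((r.val : ℕ) : ZMod ((2:ℕ) ^ 3)) = r := by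
    rw [ZMod.natCast_val, ZMod.cast_id]
  have hker : u - ((r.val : ℕ) : ℤ_[2]) ∈ Ideal.span {((2:ℕ) : ℤ_[2]) ^ 3} := by
    rw [← PadicInt.ker_toZModPow]
    show PadicInt.toZModPow 3 (u - ((r.val : ℕ) : ℤ_[2])) = 0
    rw [map_sub, map_natCast, hrval, ← hr, sub_self]
  obtain ⟨kk, hkk⟩ := Ideal.mem_span_singleton.mp hker
  have hvlt : r.val < 8 := by
    have := ZMod.val_lt r
    norm_num at this
    exact this
  have hodd : r.val % 2 = 1 := by
    rcases Nat.even_or_odd r.val with he | ho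
    · exfalso
      obtain ⟨q, hq⟩ := he
      apply not_two_dvd_of_isUnit rfl hu
      refine ⟨(q : ℤ_[2]) + ((2:ℕ) : ℤ_[2]) ^ 2 * kk, ?_⟩
      have hu' : u = ((r.val : ℕ) : ℤ_[2]) + ((2:ℕ) : ℤ_[2]) ^ 3 * kk := by
        linear_combination hkk
      rw [hu', hq]
      push_cast
      ring
    · exact Nat.odd_iff.mp ho
  have hu₀mem : r.val = 1 ∨ r.val = 3 ∨ r.val = 5 ∨ r.val = 7 := by omega
  have hsqval : r * r = 1 := by
    rw [← hrval]
    rcases hu₀mem with h | h | h | h <;> rw [h] <;> decide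
  have hsq : PadicInt.toZModPow 3 (((r.val : ℕ) : ℤ_[2]) * u) = 1 := by
    rw [map_mul, map_natCast, hrval, ← hr, hsqval]
  obtain ⟨c, hc⟩ := isSquare_of_toZModPow_three rfl hsq
  have hu₀ne : ((r.val : ℕ) : ℚ_[2]) ≠ 0 := by
    have : r.val ≠ 0 := by omega
    exact_mod_cast this
  have huq : (u : ℚ_[2]) ≠ 0 := coe_ne_zero_of_isUnit hu
  have hcq : ((r.val : ℕ) : ℚ_[2]) * (u : ℚ_[2]) = (c : ℚ_[2]) * (c : ℚ_[2]) := by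
    exact_mod_cast congrArg (fun t : ℤ_[2] => (t : ℚ_[2])) hc
  have hc0 : (c : ℚ_[2]) ≠ 0 := by
    intro h
    rw [h, mul_zero] at hcq
    exact (mul_ne_zero hu₀ne huq) hcq

  obtain ⟨u₀, hu₀mem', hcq', hu₀ne'⟩ :
      ∃ u₀ : ℕ, (u₀ = 1 ∨ u₀ = 3 ∨ u₀ = 5 ∨ u₀ = 7) ∧
        ((u₀ : ℚ_[2]) * (u : ℚ_[2]) = (c : ℚ_[2]) * (c : ℚ_[2])) ∧ ((u₀ : ℚ_[2]) ≠ 0) :=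
    ⟨r.val, hu₀mem, hcq, hu₀ne⟩
  rcases Int.even_or_odd v with ⟨k, hk⟩ | ⟨k, hk⟩
  · refine ⟨(u₀ : ℤ), ((2:ℕ) : ℚ_[2]) ^ k * (c : ℚ_[2]) / ((u₀ : ℕ) : ℚ_[2]), ?_, ?_, ?_⟩
    · rcases hu₀mem' with h | h | h | h <;> rw [h] <;> norm_num
    · exact div_ne_zero (mul_ne_zero (zpow_ne_zero _ p_ne_zero') hc0) hu₀ne'
    · have h2k : ((2:ℕ) : ℚ_[2]) ^ v = (((2:ℕ) : ℚ_[2]) ^ k) ^ 2 := by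
        rw [hk, show k + k = 2 * k by ring]
        exact pzpow_two _ k
      rw [h2k]
      have hcast : ((u₀ : ℤ) : ℚ_[2]) = ((u₀ : ℕ) : ℚ_[2]) := by push_cast; ring
      rw [hcast]
      field_simp
      linear_combination hcq'
  · refine ⟨2 * (u₀ : ℤ), ((2:ℕ) : ℚ_[2]) ^ k * (c : ℚ_[2]) / ((u₀ : ℕ) : ℚ_[2]), ?_, ?_, ?_⟩
    · rcases hu₀mem' with h | h | h | h <;> rw [h] <;> norm_num
    · exact div_ne_zero (mul_ne_zero (zpow_ne_zero _ p_ne_zero') hc0) hu₀ne'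
    · have h2k : ((2:ℕ) : ℚ_[2]) ^ v = ((2:ℕ) : ℚ_[2]) * (((2:ℕ) : ℚ_[2]) ^ k) ^ 2 := by
        rw [hk, zpow_add₀ p_ne_zero' (2 * k) 1, zpow_one, pzpow_two _ k]
        ring
      rw [h2k]
      have hcast : ((2 * (u₀ : ℤ) : ℤ) : ℚ_[2]) = ((2:ℕ) : ℚ_[2]) * ((u₀ : ℕ) : ℚ_[2]) := by
        push_cast; ring
      rw [hcast]
      field_simp
      linear_combination hcq'

end HilAux

namespace HilAux

variable {p : ℕ} [Fact p.Prime]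

theorem close_left {A B : ℤ} {s b : ℚ_[p]} (hb : b = (B : ℚ_[p]) * s ^ 2)
    (h : Rep ((A : ℚ_[p])) ((B : ℚ_[p]))) : Rep ((A : ℚ_[p])) b := by
  rw [hb, mul_comm]
  exact rep_sq_mul s h

theorem close_right {A T B : ℤ} {s b : ℚ_[p]} (hb : b = (B : ℚ_[p]) * s ^ 2)
    (h : Rep ((A : ℚ_[p])) (((T * B : ℤ) : ℚ_[p]))) :
    Rep ((A : ℚ_[p])) ((T : ℚ_[p]) * b) := by
  rw [hb]
  have heq : (T : ℚ_[p]) * ((B : ℚ_[p]) * s ^ 2) = s ^ 2 * ((T * B : ℤ) : ℚ_[p]) := by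
    push_cast
    ring
  rw [heq]
  exact rep_sq_mul s h

/-- The index-two covering property, `p = 2`. -/
theorem cover_two (hp : p = 2) {a : ℚ_[p]} (ha : a ≠ 0) :
    ∃ t : ℚ_[p], t ≠ 0 ∧ ∀ b : ℚ_[p], b ≠ 0 → Rep a b ∨ Rep a (t * b) := by
  obtain ⟨A, σ, hAmem, hσ, haeq⟩ := reduce_two hp ha
  have hshift : ∀ x : ℚ_[p], Rep a x ↔ Rep ((A : ℚ_[p])) x := by
    intro x
    rw [show a = σ ^ 2 * (A : ℚ_[p]) by rw [haeq]; ring]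
    exact rep_shift hσ
  rcases hAmem with rfl | rfl | rfl | rfl | rfl | rfl | rfl | rfl
  · exact ⟨1, one_ne_zero, fun b hb => Or.inl (rep_of_isSquare ha
      ⟨σ, by rw [haeq]; push_cast; ring⟩ b)⟩
  · refine ⟨((3 : ℤ) : ℚ_[p]), by norm_num, fun b hb => ?_⟩
    obtain ⟨B, s, hBmem, hs, hbeq⟩ := reduce_two hp hb
    rcases hBmem with rfl | rfl | rfl | rfl | rfl | rfl | rfl | rfl
    · exact Or.inl ((hshift _).mpr (close_left hbeq (rep_cast_of_data hp 3 1 1 1 0 1 0 1 (by norm_num) (by norm_num) (by norm_num) (by norm_num) (by decide))))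
    · exact Or.inr ((hshift _).mpr (close_right hbeq (rep_cast_of_data hp 3 9 1 1 0 1 0 9 (by norm_num) (by norm_num) (by norm_num) (by norm_num) (by decide))))
    · exact Or.inl ((hshift _).mpr (close_left hbeq (rep_cast_of_data hp 3 5 13 4 1 1 0 65 (by norm_num) (by norm_num) (by norm_num) (by norm_num) (by decide))))
    · exact Or.inr ((hshift _).mpr (close_right hbeq (rep_cast_of_data hp 3 21 13 4 1 1 0 273 (by norm_num) (by norm_num) (by norm_num) (by norm_num) (by decide))))
    · exact Or.inr ((hshift _).mpr (close_right hbeq (rep_cast_of_data hp 3 6 6 3 1 1 1 9 (by norm_num) (by norm_num) (by norm_num) (by norm_num) (by decide))))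
    · exact Or.inl ((hshift _).mpr (close_left hbeq (rep_cast_of_data hp 3 6 6 3 1 1 1 9 (by norm_num) (by norm_num) (by norm_num) (by norm_num) (by decide))))
    · exact Or.inr ((hshift _).mpr (close_right hbeq (rep_cast_of_data hp 3 30 46 7 1 1 1 345 (by norm_num) (by norm_num) (by norm_num) (by norm_num) (by decide))))
    · exact Or.inl ((hshift _).mpr (close_left hbeq (rep_cast_of_data hp 3 14 46 7 1 1 1 161 (by norm_num) (by norm_num) (by norm_num) (by norm_num) (by decide))))
  · refine ⟨((2 : ℤ) : ℚ_[p]), by norm_num, fun b hb => ?_⟩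
    obtain ⟨B, s, hBmem, hs, hbeq⟩ := reduce_two hp hb
    rcases hBmem with rfl | rfl | rfl | rfl | rfl | rfl | rfl | rfl
    · exact Or.inl ((hshift _).mpr (close_left hbeq (rep_cast_of_data hp 5 1 1 1 0 1 0 1 (by norm_num) (by norm_num) (by norm_num) (by norm_num) (by decide))))
    · exact Or.inl ((hshift _).mpr (close_left hbeq (rep_cast_of_data hp 5 3 11 4 1 1 0 33 (by norm_num) (by norm_num) (by norm_num) (by norm_num) (by decide))))
    · exact Or.inl ((hshift _).mpr (close_left hbeq (rep_cast_of_data hp 5 5 5 5 2 1 0 25 (by norm_num) (by norm_num) (by norm_num) (by norm_num) (by decide))))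
    · exact Or.inl ((hshift _).mpr (close_left hbeq (rep_cast_of_data hp 5 7 31 6 1 1 0 217 (by norm_num) (by norm_num) (by norm_num) (by norm_num) (by decide))))
    · exact Or.inr ((hshift _).mpr (close_right hbeq (rep_cast_of_data hp 5 4 1 1 0 1 1 1 (by norm_num) (by norm_num) (by norm_num) (by norm_num) (by decide))))
    · exact Or.inr ((hshift _).mpr (close_right hbeq (rep_cast_of_data hp 5 12 11 4 1 1 1 33 (by norm_num) (by norm_num) (by norm_num) (by norm_num) (by decide))))
    · exact Or.inr ((hshift _).mpr (close_right hbeq (rep_cast_of_data hp 5 20 5 5 2 1 1 25 (by norm_num) (by norm_num) (by norm_num) (by norm_num) (by decide))))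
    · exact Or.inr ((hshift _).mpr (close_right hbeq (rep_cast_of_data hp 5 28 31 6 1 1 1 217 (by norm_num) (by norm_num) (by norm_num) (by norm_num) (by decide))))
  · refine ⟨((3 : ℤ) : ℚ_[p]), by norm_num, fun b hb => ?_⟩
    obtain ⟨B, s, hBmem, hs, hbeq⟩ := reduce_two hp hb
    rcases hBmem with rfl | rfl | rfl | rfl | rfl | rfl | rfl | rfl
    · exact Or.inl ((hshift _).mpr (close_left hbeq (rep_cast_of_data hp 7 1 1 1 0 1 0 1 (by norm_num) (by norm_num) (by norm_num) (by norm_num) (by decide))))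
    · exact Or.inr ((hshift _).mpr (close_right hbeq (rep_cast_of_data hp 7 9 1 1 0 1 0 9 (by norm_num) (by norm_num) (by norm_num) (by norm_num) (by decide))))
    · exact Or.inl ((hshift _).mpr (close_left hbeq (rep_cast_of_data hp 7 5 21 7 2 1 0 105 (by norm_num) (by norm_num) (by norm_num) (by norm_num) (by decide))))
    · exact Or.inr ((hshift _).mpr (close_right hbeq (rep_cast_of_data hp 7 21 21 7 2 1 0 441 (by norm_num) (by norm_num) (by norm_num) (by norm_num) (by decide))))
    · exact Or.inl ((hshift _).mpr (close_left hbeq (rep_cast_of_data hp 7 2 2 3 1 1 1 1 (by norm_num) (by norm_num) (by norm_num) (by norm_num) (by decide))))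
    · exact Or.inr ((hshift _).mpr (close_right hbeq (rep_cast_of_data hp 7 18 2 3 1 1 1 9 (by norm_num) (by norm_num) (by norm_num) (by norm_num) (by decide))))
    · exact Or.inl ((hshift _).mpr (close_left hbeq (rep_cast_of_data hp 7 10 42 7 1 1 1 105 (by norm_num) (by norm_num) (by norm_num) (by norm_num) (by decide))))
    · exact Or.inr ((hshift _).mpr (close_right hbeq (rep_cast_of_data hp 7 42 42 7 1 1 1 441 (by norm_num) (by norm_num) (by norm_num) (by norm_num) (by decide))))
  · refine ⟨((3 : ℤ) : ℚ_[p]), by norm_num, fun b hb => ?_⟩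
    obtain ⟨B, s, hBmem, hs, hbeq⟩ := reduce_two hp hb
    rcases hBmem with rfl | rfl | rfl | rfl | rfl | rfl | rfl | rfl
    · exact Or.inl ((hshift _).mpr (close_left hbeq (rep_cast_of_data hp 2 1 1 1 0 1 0 1 (by norm_num) (by norm_num) (by norm_num) (by norm_num) (by decide))))
    · exact Or.inr ((hshift _).mpr (close_right hbeq (rep_cast_of_data hp 2 9 1 1 0 1 0 9 (by norm_num) (by norm_num) (by norm_num) (by norm_num) (by decide))))
    · exact Or.inr ((hshift _).mpr (close_right hbeq (rep_cast_of_data hp 2 15 7 3 1 1 0 105 (by norm_num) (by norm_num) (by norm_num) (by norm_num) (by decide))))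
    · exact Or.inl ((hshift _).mpr (close_left hbeq (rep_cast_of_data hp 2 7 7 3 1 1 0 49 (by norm_num) (by norm_num) (by norm_num) (by norm_num) (by decide))))
    · exact Or.inl ((hshift _).mpr (close_left hbeq (rep_cast_of_data hp 2 2 2 2 1 1 1 1 (by norm_num) (by norm_num) (by norm_num) (by norm_num) (by decide))))
    · exact Or.inr ((hshift _).mpr (close_right hbeq (rep_cast_of_data hp 2 18 2 2 1 1 1 9 (by norm_num) (by norm_num) (by norm_num) (by norm_num) (by decide))))
    · exact Or.inr ((hshift _).mpr (close_right hbeq (rep_cast_of_data hp 2 30 14 4 1 1 1 105 (by norm_num) (by norm_num) (by norm_num) (by norm_num) (by decide))))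
    · exact Or.inl ((hshift _).mpr (close_left hbeq (rep_cast_of_data hp 2 14 14 4 1 1 1 49 (by norm_num) (by norm_num) (by norm_num) (by norm_num) (by decide))))
  · refine ⟨((5 : ℤ) : ℚ_[p]), by norm_num, fun b hb => ?_⟩
    obtain ⟨B, s, hBmem, hs, hbeq⟩ := reduce_two hp hb
    rcases hBmem with rfl | rfl | rfl | rfl | rfl | rfl | rfl | rfl
    · exact Or.inl ((hshift _).mpr (close_left hbeq (rep_cast_of_data hp 6 1 1 1 0 1 0 1 (by norm_num) (by norm_num) (by norm_num) (by norm_num) (by decide))))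
    · exact Or.inl ((hshift _).mpr (close_left hbeq (rep_cast_of_data hp 6 3 3 3 1 1 0 9 (by norm_num) (by norm_num) (by norm_num) (by norm_num) (by decide))))
    · exact Or.inr ((hshift _).mpr (close_right hbeq (rep_cast_of_data hp 6 25 1 1 0 1 0 25 (by norm_num) (by norm_num) (by norm_num) (by norm_num) (by decide))))
    · exact Or.inr ((hshift _).mpr (close_right hbeq (rep_cast_of_data hp 6 35 3 3 1 1 0 105 (by norm_num) (by norm_num) (by norm_num) (by norm_num) (by decide))))
    · exact Or.inr ((hshift _).mpr (close_right hbeq (rep_cast_of_data hp 6 10 10 4 1 1 1 25 (by norm_num) (by norm_num) (by norm_num) (by norm_num) (by decide))))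
    · exact Or.inr ((hshift _).mpr (close_right hbeq (rep_cast_of_data hp 6 30 30 6 1 1 1 225 (by norm_num) (by norm_num) (by norm_num) (by norm_num) (by decide))))
    · exact Or.inl ((hshift _).mpr (close_left hbeq (rep_cast_of_data hp 6 10 10 4 1 1 1 25 (by norm_num) (by norm_num) (by norm_num) (by norm_num) (by decide))))
    · exact Or.inl ((hshift _).mpr (close_left hbeq (rep_cast_of_data hp 6 14 30 6 1 1 1 105 (by norm_num) (by norm_num) (by norm_num) (by norm_num) (by decide))))
  · refine ⟨((3 : ℤ) : ℚ_[p]), by norm_num, fun b hb => ?_⟩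
    obtain ⟨B, s, hBmem, hs, hbeq⟩ := reduce_two hp hb
    rcases hBmem with rfl | rfl | rfl | rfl | rfl | rfl | rfl | rfl
    · exact Or.inl ((hshift _).mpr (close_left hbeq (rep_cast_of_data hp 10 1 1 1 0 1 0 1 (by norm_num) (by norm_num) (by norm_num) (by norm_num) (by decide))))
    · exact Or.inr ((hshift _).mpr (close_right hbeq (rep_cast_of_data hp 10 9 1 1 0 1 0 9 (by norm_num) (by norm_num) (by norm_num) (by norm_num) (by decide))))
    · exact Or.inr ((hshift _).mpr (close_right hbeq (rep_cast_of_data hp 10 15 15 5 1 1 0 225 (by norm_num) (by norm_num) (by norm_num) (by norm_num) (by decide))))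
    · exact Or.inl ((hshift _).mpr (close_left hbeq (rep_cast_of_data hp 10 7 15 5 1 1 0 105 (by norm_num) (by norm_num) (by norm_num) (by norm_num) (by decide))))
    · exact Or.inr ((hshift _).mpr (close_right hbeq (rep_cast_of_data hp 10 6 6 4 1 1 1 9 (by norm_num) (by norm_num) (by norm_num) (by norm_num) (by decide))))
    · exact Or.inl ((hshift _).mpr (close_left hbeq (rep_cast_of_data hp 10 6 6 4 1 1 1 9 (by norm_num) (by norm_num) (by norm_num) (by norm_num) (by decide))))
    · exact Or.inl ((hshift _).mpr (close_left hbeq (rep_cast_of_data hp 10 10 10 10 3 1 1 25 (by norm_num) (by norm_num) (by norm_num) (by norm_num) (by decide))))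
    · exact Or.inr ((hshift _).mpr (close_right hbeq (rep_cast_of_data hp 10 42 10 10 3 1 1 105 (by norm_num) (by norm_num) (by norm_num) (by norm_num) (by decide))))
  · refine ⟨((5 : ℤ) : ℚ_[p]), by norm_num, fun b hb => ?_⟩
    obtain ⟨B, s, hBmem, hs, hbeq⟩ := reduce_two hp hb
    rcases hBmem with rfl | rfl | rfl | rfl | rfl | rfl | rfl | rfl
    · exact Or.inl ((hshift _).mpr (close_left hbeq (rep_cast_of_data hp 14 1 1 1 0 1 0 1 (by norm_num) (by norm_num) (by norm_num) (by norm_num) (by decide))))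
    · exact Or.inl ((hshift _).mpr (close_left hbeq (rep_cast_of_data hp 14 3 11 5 1 1 0 33 (by norm_num) (by norm_num) (by norm_num) (by norm_num) (by decide))))
    · exact Or.inr ((hshift _).mpr (close_right hbeq (rep_cast_of_data hp 14 25 1 1 0 1 0 25 (by norm_num) (by norm_num) (by norm_num) (by norm_num) (by decide))))
    · exact Or.inr ((hshift _).mpr (close_right hbeq (rep_cast_of_data hp 14 35 11 5 1 1 0 385 (by norm_num) (by norm_num) (by norm_num) (by norm_num) (by decide))))
    · exact Or.inl ((hshift _).mpr (close_left hbeq (rep_cast_of_data hp 14 2 2 4 1 1 1 1 (by norm_num) (by norm_num) (by norm_num) (by norm_num) (by decide))))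
    · exact Or.inl ((hshift _).mpr (close_left hbeq (rep_cast_of_data hp 14 6 22 6 1 1 1 33 (by norm_num) (by norm_num) (by norm_num) (by norm_num) (by decide))))
    · exact Or.inr ((hshift _).mpr (close_right hbeq (rep_cast_of_data hp 14 50 2 4 1 1 1 25 (by norm_num) (by norm_num) (by norm_num) (by norm_num) (by decide))))
    · exact Or.inr ((hshift _).mpr (close_right hbeq (rep_cast_of_data hp 14 70 22 6 1 1 1 385 (by norm_num) (by norm_num) (by norm_num) (by norm_num) (by decide))))

end HilAux

namespace HilAux

variable {p : ℕ} [Fact p.Prime]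

theorem cover (a : ℚ_[p]) (ha : a ≠ 0) :
    ∃ t : ℚ_[p], t ≠ 0 ∧ ∀ b : ℚ_[p], b ≠ 0 → Rep a b ∨ Rep a (t * b) := by
  by_cases hp : p = 2
  · exact cover_two hp ha
  · exact cover_odd hp ha

theorem rep_mul_of_not_not {a b c : ℚ_[p]} (ha : a ≠ 0) (hb : b ≠ 0) (hc : c ≠ 0)
    (Hb : ¬Rep a b) (Hc : ¬Rep a c) : Rep a (b * c) := by
  obtain ⟨t, ht, hcov⟩ := cover a ha
  have hb' : Rep a (t * b) := (hcov b hb).resolve_left Hb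
  have hc' : Rep a (t * c) := (hcov c hc).resolve_left Hc
  have h := rep_mul hb' hc'
  rw [show t * b * (t * c) = t ^ 2 * (b * c) by ring] at h
  exact rep_of_sq_mul ht h

theorem hil_cases (a b : ℚ) : hilbertSym p a b = 1 ∨ hilbertSym p a b = -1 := by
  unfold hilbertSym
  split_ifs
  · exact Or.inl rfl
  · exact Or.inr rfl

theorem hil_eq_of_iff {a b a' b' : ℚ}
    (h : hilbertSym p a b = 1 ↔ hilbertSym p a' b' = 1) :
    hilbertSym p a b = hilbertSym p a' b' := by
  rcases hil_cases (p := p) a b with h1 | h1 <;> rcases hil_cases (p := p) a' b' with h2 | h2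
  · rw [h1, h2]
  · exfalso
    have := h.mp h1
    rw [h2] at this
    norm_num at this
  · exfalso
    have := h.mpr h2
    rw [h1] at this
    norm_num at this
  · rw [h1, h2]

theorem hil_mul {a b c : ℚ} (ha : a ≠ 0) (hb : b ≠ 0) (hc : c ≠ 0) :
    hilbertSym p a (b * c) = hilbertSym p a b * hilbertSym p a c := by
  have hbc : b * c ≠ 0 := mul_ne_zero hb hc
  have hcast : ((b * c : ℚ) : ℚ_[p]) = (b : ℚ_[p]) * (c : ℚ_[p]) := by push_cast; ring
  have ha' : (a : ℚ_[p]) ≠ 0 := by exact_mod_cast ha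
  have hb' : (b : ℚ_[p]) ≠ 0 := by exact_mod_cast hb
  have hc' : (c : ℚ_[p]) ≠ 0 := by exact_mod_cast hc
  by_cases Hb : Rep ((a : ℚ_[p])) ((b : ℚ_[p])) <;>
    by_cases Hc : Rep ((a : ℚ_[p])) ((c : ℚ_[p]))
  · rw [(hilbertSym_eq_one_iff ha hb).mpr Hb, (hilbertSym_eq_one_iff ha hc).mpr Hc,
      (hilbertSym_eq_one_iff ha hbc).mpr (by rw [hcast]; exact rep_mul Hb Hc)]
    norm_num
  · rw [(hilbertSym_eq_one_iff ha hb).mpr Hb, (hilbertSym_eq_neg_one_iff ha hc).mpr Hc,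
      (hilbertSym_eq_neg_one_iff ha hbc).mpr ?_]
    · norm_num
    · rw [hcast]
      intro h
      exact Hc (rep_cancel hb' Hb h)
  · rw [(hilbertSym_eq_neg_one_iff ha hb).mpr Hb, (hilbertSym_eq_one_iff ha hc).mpr Hc,
      (hilbertSym_eq_neg_one_iff ha hbc).mpr ?_]
    · norm_num
    · rw [hcast, mul_comm]
      intro h
      exact Hb (rep_cancel hc' Hc h)
  · rw [(hilbertSym_eq_neg_one_iff ha hb).mpr Hb, (hilbertSym_eq_neg_one_iff ha hc).mpr Hc,
      (hilbertSym_eq_one_iff ha hbc).mpr ?_]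
    · norm_num
    · rw [hcast]
      exact rep_mul_of_not_not ha' hb' hc' Hb Hc

theorem hil_mul_first {a b c : ℚ} (ha : a ≠ 0) (hb : b ≠ 0) (hc : c ≠ 0) :
    hilbertSym p (b * c) a = hilbertSym p b a * hilbertSym p c a := by
  rw [hilbertSym_symm (b * c) a, hilbertSym_symm b a, hilbertSym_symm c a]
  exact hil_mul ha hb hc

theorem hil_sq_first {a b s : ℚ} (ha : a ≠ 0) (hb : b ≠ 0) (hs : s ≠ 0) :
    hilbertSym p (s ^ 2 * a) b = hilbertSym p a b := by
  have hs2a : s ^ 2 * a ≠ 0 := mul_ne_zero (pow_ne_zero 2 hs) ha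
  have hs' : (s : ℚ_[p]) ≠ 0 := by exact_mod_cast hs
  apply hil_eq_of_iff
  rw [hilbertSym_eq_one_iff hs2a hb, hilbertSym_eq_one_iff ha hb]
  have hcast : ((s ^ 2 * a : ℚ) : ℚ_[p]) = (s : ℚ_[p]) ^ 2 * (a : ℚ_[p]) := by push_cast; ring
  rw [hcast]
  exact rep_shift hs'

theorem hil_neg_self {a : ℚ} (ha : a ≠ 0) : hilbertSym p a (-a) = 1 :=
  (hilbertSym_eq_one_iff ha (neg_ne_zero.mpr ha)).mpr ⟨0, 1, by push_cast; ring⟩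

theorem hil_one_sub {a : ℚ} (ha : a ≠ 0) (ha1 : a ≠ 1) : hilbertSym p a (1 - a) = 1 :=
  (hilbertSym_eq_one_iff ha (sub_ne_zero_of_ne (Ne.symm ha1))).mpr
    ⟨1, 1, by push_cast; ring⟩

theorem hil_one_right {a : ℚ} (ha : a ≠ 0) : hilbertSym p a 1 = 1 :=
  (hilbertSym_eq_one_iff ha one_ne_zero).mpr ⟨1, 0, by push_cast; ring⟩

theorem hil_one_left {b : ℚ} (hb : b ≠ 0) : hilbertSym p 1 b = 1 := by
  rw [hilbertSym_symm]
  exact hil_one_right hb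

theorem hil_prod_first {s : Finset ℕ} {f : ℕ → ℚ} (hf : ∀ i ∈ s, f i ≠ 0) {c : ℚ}
    (hc : c ≠ 0) :
    ∏ i ∈ s, hilbertSym p (f i) c = hilbertSym p (∏ i ∈ s, f i) c := by
  classical
  induction s using Finset.cons_induction with
  | empty => simpa using (hil_one_left hc).symm
  | cons a s ha ih =>
    rw [Finset.prod_cons, Finset.prod_cons,
      ih (fun i hi => hf i (Finset.mem_cons_of_mem hi)),
      ← hil_mul_first hc (hf a (Finset.mem_cons_self a s))
        (Finset.prod_ne_zero_iff.mpr fun i hi => hf i (Finset.mem_cons_of_mem hi))]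

theorem prod_fact (n : ℕ) (hn : 1 ≤ n) :
    ∃ s : ℚ, s ≠ 0 ∧
      ∏ i ∈ Finset.Ico 2 (n + 1), ((i : ℚ) * ((i : ℚ) - 1)) = (n : ℚ) * s ^ 2 := by
  induction n, hn using Nat.le_induction with
  | base =>
    refine ⟨1, one_ne_zero, ?_⟩
    rw [show Finset.Ico 2 2 = (∅ : Finset ℕ) by simp]
    simp
  | succ n hn ih =>
    obtain ⟨s, hs, hprod⟩ := ih
    have hN : (n : ℚ) ≠ 0 := by exact_mod_cast Nat.one_le_iff_ne_zero.mp hn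
    refine ⟨(n : ℚ) * s, mul_ne_zero hN hs, ?_⟩
    rw [Finset.prod_Ico_succ_top (by omega : 2 ≤ n + 1), hprod]
    push_cast
    ring

end HilAux

theorem stmt7 (p : ℕ) [Fact p.Prime] (n : ℕ) (hn : 1 ≤ n) :
    ∏ j ∈ Finset.Icc 2 n, ∏ i ∈ Finset.Ico 2 j,
        hilbertSym p ((i : ℚ) * ((i : ℚ) - 1)) ((j : ℚ) * ((j : ℚ) - 1)) =
      hilbertSym p (-1) (n : ℚ) := by
  induction n, hn using Nat.le_induction with
  | base =>
    rw [show Finset.Icc 2 1 = (∅ : Finset ℕ) by simp]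
    simpa using (HilAux.hil_one_right (by norm_num : (-1 : ℚ) ≠ 0)).symm
  | succ n hn ih =>
    have hN : (n : ℚ) ≠ 0 := by exact_mod_cast Nat.one_le_iff_ne_zero.mp hn
    have hN1 : (n : ℚ) + 1 ≠ 0 := by positivity
    have hneg : (-1 : ℚ) ≠ 0 := by norm_num
    rw [Finset.prod_Icc_succ_top (by omega : 2 ≤ n + 1), ih]
    -- the new column
    have hcast1 : ((n + 1 : ℕ) : ℚ) = (n : ℚ) + 1 := by push_cast; ring
    have hfne : ∀ i ∈ Finset.Ico 2 (n + 1), ((i : ℚ) * ((i : ℚ) - 1)) ≠ 0 := by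
      intro i hi
      obtain ⟨h2, _⟩ := Finset.mem_Ico.mp hi
      have hi0 : (i : ℚ) ≠ 0 := by
        exact_mod_cast (by omega : i ≠ 0)
      have hi1 : (i : ℚ) - 1 ≠ 0 := by
        have : (i : ℚ) ≠ 1 := by exact_mod_cast (by omega : i ≠ 1)
        intro h
        exact this (by linarith)
      exact mul_ne_zero hi0 hi1
    have hc : ((n + 1 : ℕ) : ℚ) * (((n + 1 : ℕ) : ℚ) - 1) = ((n : ℚ) + 1) * (n : ℚ) := by
      push_cast; ring
    rw [hc]
    have hcne : ((n : ℚ) + 1) * (n : ℚ) ≠ 0 := mul_ne_zero hN1 hN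
    rw [HilAux.hil_prod_first hfne hcne]
    obtain ⟨s, hs, hprod⟩ := HilAux.prod_fact n hn
    rw [hprod, show (n : ℚ) * s ^ 2 = s ^ 2 * (n : ℚ) by ring,
      HilAux.hil_sq_first hN hcne hs]
    have hnegN : -(n : ℚ) ≠ 0 := neg_ne_zero.mpr hN
    have hn1 : (1 : ℚ) ≤ (n : ℚ) := by exact_mod_cast hn
    have e1 : hilbertSym p ((n : ℚ)) (((n : ℚ) + 1) * (n : ℚ))
        = hilbertSym p (n : ℚ) ((n : ℚ) + 1) * hilbertSym p (n : ℚ) (n : ℚ) :=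
      HilAux.hil_mul hN hN1 hN
    have e2 : hilbertSym p (n : ℚ) (n : ℚ) = hilbertSym p (n : ℚ) (-1) := by
      have h2 := HilAux.hil_mul (p := p) hN hneg hnegN
      rw [show (-1 : ℚ) * (-(n : ℚ)) = (n : ℚ) by ring] at h2
      rw [h2, HilAux.hil_neg_self hN, mul_one]
    have e4 : hilbertSym p ((n : ℚ) + 1) (-(n : ℚ)) = 1 := by
      rw [HilAux.hilbertSym_symm, show (n : ℚ) + 1 = 1 - (-(n : ℚ)) by ring]
      exact HilAux.hil_one_sub hnegN (by intro h; linarith)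
    have e5 : hilbertSym p (n : ℚ) ((n : ℚ) + 1) = hilbertSym p (-1) ((n : ℚ) + 1) := by
      rw [HilAux.hilbertSym_symm ((n : ℚ)) ((n : ℚ) + 1)]
      have h3 := HilAux.hil_mul (p := p) hN1 hneg hnegN
      rw [show (-1 : ℚ) * (-(n : ℚ)) = (n : ℚ) by ring] at h3
      rw [h3, e4, mul_one, HilAux.hilbertSym_symm]
    rw [hcast1, e1, e2, e5, HilAux.hilbertSym_symm ((n : ℚ)) (-1)]
    have hms := HilAux.hilbertSym_mul_self (p := p) (-1) ((n : ℚ))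
    linear_combination (hilbertSym p (-1) ((n : ℚ) + 1)) * hms
end

section
/- A positive integer n is a sum of two integer squares if and only if the Hilbert symbol (−1, n)_p equals 1 for every prime p. -/
/-- If `q % 4 = 3`, then `-1` is not a square in `ℚ_[q]`. -/
lemma aux_neg_one_not_sq {q : ℕ} [hq : Fact q.Prime] (hq3 : q % 4 = 3) (u : ℚ_[q]) :
    u ^ 2 ≠ -1 := by
  intro h
  have hu1 : ‖u‖ ≤ 1 := by
    by_contra hgt
    push_neg at hgt
    have : ‖u ^ 2‖ = 1 := by rw [h]; simp
    rw [norm_pow] at this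
    nlinarith
  set t : ℤ_[q] := ⟨u, hu1⟩ with ht
  have h2 : (1 + t ^ 2 : ℤ_[q]) = 0 := by
    have : ((1 + t ^ 2 : ℤ_[q]) : ℚ_[q]) = 0 := by
      push_cast [ht, h]; change (1 : ℚ_[q]) + u ^ 2 = 0; rw [h]; ring
    exact PadicInt.coe_eq_zero.mp this
  have h3 : (PadicInt.toZMod t) ^ 2 = (-1 : ZMod q) := by
    have := congrArg (PadicInt.toZMod (p := q)) h2
    simp only [map_add, map_one, map_pow, map_zero] at this
    linear_combination this
  exact (ZMod.exists_sq_eq_neg_one_iff.mp ⟨_, (sq (PadicInt.toZMod t)) ▸ h3.symm⟩) hq3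

/-- Auxiliary: if `q % 4 = 3` and `a² + b² ≠ 0` with `‖b‖ ≤ ‖a‖`,
the valuation of `a² + b²` is even. -/
lemma aux_val_even {q : ℕ} [hq : Fact q.Prime] (hq3 : q % 4 = 3)
    {a b : ℚ_[q]} (hab : a ^ 2 + b ^ 2 ≠ 0) (h : ‖b‖ ≤ ‖a‖) :
    Even (a ^ 2 + b ^ 2).valuation := by
  have ha : a ≠ 0 := by
    rintro rfl
    have hb : b = 0 := by
      rw [norm_zero] at h
      exact norm_le_zero_iff.mp h
    rw [hb] at hab
    simp at hab
  set t : ℤ_[q] := ⟨b / a, by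
    rw [norm_div]
    exact div_le_one_of_le₀ h (norm_nonneg _)⟩ with ht
  have hunit : ‖(1 + t ^ 2 : ℤ_[q])‖ = 1 := by
    rcases lt_or_eq_of_le (PadicInt.norm_le_one (1 + t ^ 2)) with hlt | heq
    · exfalso
      have hmem : (1 + t ^ 2) ∈ IsLocalRing.maximalIdeal ℤ_[q] := by
        rw [PadicInt.maximalIdeal_eq_span_p, Ideal.mem_span_singleton,
          ← PadicInt.norm_lt_one_iff_dvd]
        exact hlt
      have h0 : PadicInt.toZMod (1 + t ^ 2) = 0 := by
        rw [← RingHom.mem_ker, PadicInt.ker_toZMod]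
        exact hmem
      simp only [map_add, map_one, map_pow] at h0
      have h3 : (PadicInt.toZMod t) ^ 2 = (-1 : ZMod q) := by linear_combination h0
      exact (ZMod.exists_sq_eq_neg_one_iff.mp
        ⟨_, (sq (PadicInt.toZMod t)) ▸ h3.symm⟩) hq3
    · exact heq
  have hu0 : ((1 + t ^ 2 : ℤ_[q]) : ℚ_[q]) ≠ 0 := by
    intro h0
    have : (1 + t ^ 2 : ℤ_[q]) = 0 := PadicInt.coe_eq_zero.mp h0
    rw [this, norm_zero] at hunit
    norm_num at hunit
  have hkey : a ^ 2 + b ^ 2 = a ^ 2 * ((1 + t ^ 2 : ℤ_[q]) : ℚ_[q]) := by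
    push_cast [ht]
    change a ^ 2 + b ^ 2 = a ^ 2 * (1 + (b / a) ^ 2)
    field_simp
  have hval0 : ((1 + t ^ 2 : ℤ_[q]) : ℚ_[q]).valuation = 0 := by
    have hnpv := Padic.norm_eq_zpow_neg_valuation hu0
    rw [PadicInt.padic_norm_e_of_padicInt, hunit] at hnpv
    have hq1 : (1 : ℝ) < (q : ℝ) := by exact_mod_cast hq.out.one_lt
    have hinj := zpow_right_injective₀ (a := (q : ℝ)) (by linarith) (by linarith)
    have h0 := hinj (a₁ := -((1 + t ^ 2 : ℤ_[q]) : ℚ_[q]).valuation) (a₂ := 0)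
      (by simpa using hnpv.symm)
    omega
  rw [hkey, Padic.valuation_mul (pow_ne_zero 2 ha) hu0, hval0, add_zero, sq,
    Padic.valuation_mul ha ha]
  exact ⟨a.valuation, rfl⟩

lemma aux_val_even' {q : ℕ} [hq : Fact q.Prime] (hq3 : q % 4 = 3)
    {a b : ℚ_[q]} (hab : a ^ 2 + b ^ 2 ≠ 0) :
    Even (a ^ 2 + b ^ 2).valuation := by
  rcases le_total ‖b‖ ‖a‖ with h | h
  · exact aux_val_even hq3 hab h
  · rw [add_comm] at hab ⊢
    exact aux_val_even hq3 hab h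

theorem stmt10 (n : ℕ) (hn : 0 < n) :
    (∃ a b : ℤ, (n : ℤ) = a ^ 2 + b ^ 2) ↔
      ∀ (p : ℕ) [Fact p.Prime], hilbertSym p (-1) (n : ℚ) = 1 := by
  constructor
  · rintro ⟨a, b, hab⟩ p _
    rw [hilbertSym, if_pos]
    refine ⟨(a : ℚ_[p]), 1, (b : ℚ_[p]), fun hc => one_ne_zero hc.2.1, ?_⟩
    have h2 : ((n : ℤ) : ℚ_[p]) = ((a : ℤ) : ℚ_[p]) ^ 2 + ((b : ℤ) : ℚ_[p]) ^ 2 := by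
      exact_mod_cast congrArg (fun k : ℤ => (k : ℚ_[p])) hab
    push_cast at h2 ⊢
    linear_combination h2
  · intro H
    have key : ∀ {q : ℕ}, q.Prime → q % 4 = 3 → Even (padicValNat q n) := by
      intro q hqp hq3
      haveI : Fact q.Prime := ⟨hqp⟩
      have h := H q
      rw [hilbertSym] at h
      split_ifs at h with hex
      · obtain ⟨x, y, z, hnt, heq⟩ := hex
        push_cast at heq
        have hy : y ≠ 0 := by
          rintro rfl
          rcases eq_or_ne x 0 with rfl | hx
          · simp only [ne_eq, zero_pow, mul_zero, add_zero, neg_mul] at heq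
            refine hnt ⟨rfl, rfl, ?_⟩
            have : z ^ 2 = 0 := by linear_combination -heq
            exact pow_eq_zero_iff (by norm_num) |>.mp this
          · have : (z / x) ^ 2 = -1 := by
              field_simp
              linear_combination -heq
            exact aux_neg_one_not_sq hq3 _ this
        have hnq : ((n : ℚ_[q])) = (z / y) ^ 2 + (x / y) ^ 2 := by
          field_simp
          linear_combination heq
        have hne : ((z / y) ^ 2 + (x / y) ^ 2 : ℚ_[q]) ≠ 0 := by
          rw [← hnq]
          exact_mod_cast Nat.cast_ne_zero.mpr hn.ne'
        have heven := aux_val_even' hq3 hne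
        rw [← hnq, Padic.valuation_natCast] at heven
        exact Int.even_coe_nat _ |>.mp heven
    obtain ⟨x, y, hxy⟩ := Nat.eq_sq_add_sq_iff.mpr (fun q hq => key (Nat.prime_of_mem_primeFactors hq))
    exact ⟨x, y, by exact_mod_cast hxy⟩
end

section
/- Let q > 2 be an integer and d = 2. If 2q + 1 = x² for some integer x and q is a prime power, then q = 4. (Indeed x is odd, x = 2y+1 gives q = 2y(y+1), so q is even, hence a power of 2, forcing both y and y+1 to be powers of 2, so y = 1.) -/
theorem stmt13 (q : ℕ) (x : ℤ) (hq : 2 < q) (hpp : IsPrimePow q)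
    (hx : x ^ 2 = 2 * (q : ℤ) + 1) : q = 4 := by
  obtain ⟨p, e, hp, he, rfl⟩ := hpp
  have hp' : Nat.Prime p := Nat.prime_iff.mpr hp
  set n := x.natAbs with hn
  have hnq : n ^ 2 = 2 * p ^ e + 1 := by
    have : (n : ℤ) ^ 2 = 2 * (p ^ e : ℕ) + 1 := by
      rw [hn, Int.natAbs_sq] at *
      push_cast
      push_cast at hx
      nlinarith [hx, sq_abs x]
    exact_mod_cast this
  have hodd : Odd n := by
    rcases Nat.even_or_odd n with h | h
    · exfalso
      have : Even (n ^ 2) := Nat.even_pow.mpr ⟨h, two_ne_zero⟩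
      rw [hnq] at this
      obtain ⟨r, hr⟩ := this
      omega
    · exact h
  obtain ⟨m, hm⟩ := hodd
  have h2 : (2 * m + 1) * (2 * m + 1) = 2 * p ^ e + 1 := by
    rw [← sq, ← hm]; exact hnq
  have key : p ^ e = 2 * (m * (m + 1)) := by nlinarith [h2]
  have hm1 : 1 ≤ m := by nlinarith [key, hq]
  have hd1 : m ∣ p ^ e := ⟨2 * (m + 1), by rw [key]; ring⟩
  have hd2 : (m + 1) ∣ p ^ e := ⟨2 * m, by rw [key]; ring⟩
  have hp2 : p = 2 := by
    have h2d : 2 ∣ p ^ e := ⟨m * (m + 1), key⟩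
    have := Nat.Prime.dvd_of_dvd_pow Nat.prime_two h2d
    rcases (Nat.Prime.eq_one_or_self_of_dvd hp' 2 this) with h | h <;> omega
  subst hp2
  obtain ⟨i, hi, rfl⟩ := (Nat.dvd_prime_pow Nat.prime_two).mp hd1
  obtain ⟨j, hj, hmj⟩ := (Nat.dvd_prime_pow Nat.prime_two).mp hd2
  have hj1 : 1 ≤ j := by
    by_contra h
    interval_cases j <;> omega
  have hmeven : Even (2 ^ i + 1) := by
    rw [hmj]
    exact (Nat.even_pow.mpr ⟨even_two, by omega⟩)
  have hi0 : i = 0 := by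
    by_contra h
    have h2e : Even (2 ^ i) := Nat.even_pow.mpr ⟨even_two, h⟩
    obtain ⟨r, hr⟩ := h2e
    obtain ⟨s, hs⟩ := hmeven
    omega
  subst hi0
  simp at key ⊢
  omega
end
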